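/- (Corollary: Markov chains under degraded sources when one encoder sees both X and Z.) Suppose additionally that the source pmf satisfies the Markov chain X −∘− Z −∘− Y and that the x-encoder has access to both X^n and Z^n, i.e. J_x^l = f_x^l(X^n, Z^n, J_x^{[1:l-1]}, J_y^{[1:l-1]}). Then for every t ∈ {1,…,n} and l ∈ {1,…,K}: (1) (J_x^1, Z_{[1:t-1]}, Y_{[t+1:n]}) −∘− Z_t −∘− Y_t; (2) (J_x^l, Z_{[t+1:n]}) −∘− (J_x^{[1:l-1]}, J_y^{[1:l-1]}, Z_{[1:t]}, Y_{[t+1:n]}) −∘− Y_t; (3) (J_y^l, Y_{[1:t-1]}) −∘− (J_x^{[1:l]}, J_y^{[1:l-1]}, Z_{[1:t-1]}, Y_{[t:n]}) −∘− (X_t, Z_t); and (4) (Z_{[t+1:n]}, X^n) −∘− (J_x^{[1:K]}, J_y^{[1:K]}, Z_{[1:t]}, Y_{[t+1:n]}) −∘− Y_{[1:t]}. -/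

import Mathlib

noncomputable section

namespace IT

variable {Ω : Type*} [Fintype Ω]

open Classical in
/-- Probability of an event under a weight function on a finite sample space. -/
def pr (w : Ω → ℝ) (E : Ω → Prop) : ℝ := ∑ ω, if E ω then w ω else 0

open Classical in
/-- The distribution (pmf) of a random variable. -/
def dist (w : Ω → ℝ) {α : Type*} [Fintype α] (X : Ω → α) (a : α) : ℝ :=
  ∑ ω, if X ω = a then w ω else 0

/-- Shannon entropy (base 2). -/
def H (w : Ω → ℝ) {α : Type*} [Fintype α] (X : Ω → α) : ℝ :=
  -∑ a, dist w X a * Real.logb 2 (dist w X a)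

/-- Conditional entropy H(X|Y). -/
def condH (w : Ω → ℝ) {α β : Type*} [Fintype α] [Fintype β] (X : Ω → α) (Y : Ω → β) : ℝ :=
  H w (fun ω => (X ω, Y ω)) - H w Y

/-- Mutual information I(X;Y). -/
def mutInfo (w : Ω → ℝ) {α β : Type*} [Fintype α] [Fintype β] (X : Ω → α) (Y : Ω → β) : ℝ :=
  H w X + H w Y - H w (fun ω => (X ω, Y ω))

/-- Conditional mutual information I(X;Y|Z). -/
def condMutInfo (w : Ω → ℝ) {α β γ : Type*} [Fintype α] [Fintype β] [Fintype γ]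
    (X : Ω → α) (Y : Ω → β) (Z : Ω → γ) : ℝ :=
  condH w X Z - condH w X (fun ω => (Y ω, Z ω))

/-- Expectation of a real random variable. -/
def expect (w : Ω → ℝ) (f : Ω → ℝ) : ℝ := ∑ ω, w ω * f ω

end IT

/-- `p` is a probability mass function on a finite type. -/
def IsPMF {α : Type*} [Fintype α] (p : α → ℝ) : Prop := (∀ a, 0 ≤ p a) ∧ ∑ a, p a = 1

/-- The i.i.d. (product) weight on `n`-sequences induced by a single-letter pmf. -/
def iidW {α : Type*} (p : α → ℝ) (n : ℕ) : (Fin n → α) → ℝ := fun x => ∏ t, p (x t)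

/-- The first `l` components of a dependent tuple (the rest masked). -/
def trunc {K : ℕ} {γ : Fin K → Type*} (l : ℕ) (f : (k : Fin K) → γ k) :
    (k : Fin K) → Option (γ k) :=
  fun k => if k.val < l then some (f k) else none

/-- Coordinates with (0-based) index `< t`. -/
def below {n : ℕ} {α : Type*} (t : ℕ) (x : Fin n → α) : Fin n → Option α :=
  fun s => if s.val < t then some (x s) else none

/-- Coordinates with (0-based) index `> t`. -/
def above {n : ℕ} {α : Type*} (t : ℕ) (x : Fin n → α) : Fin n → Option α :=
  fun s => if t < s.val then some (x s) else none

/-- Coordinates with (0-based) index `≥ t`. -/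
def fromIdx {n : ℕ} {α : Type*} (t : ℕ) (x : Fin n → α) : Fin n → Option α :=
  fun s => if t ≤ s.val then some (x s) else none

open Classical in
/-- Number of occurrences of `a` in the sequence `x`. -/
def Nocc {n : ℕ} {α : Type*} (a : α) (x : Fin n → α) : ℕ :=
  (Finset.univ.filter fun t => x t = a).card

/-- Strongly typical set. -/
def typical {α : Type*} [Fintype α] (Q : α → ℝ) (δ : ℝ) (n : ℕ) : Set (Fin n → α) :=
  {x | ∀ a, Q a ≠ 0 → |(Nocc a x : ℝ) / n - Q a| ≤ δ / Fintype.card α}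


open IT

section Aux

open IT Finset

variable {Ω : Type*} [Fintype Ω] {α β γ : Type*} [Fintype α] [Fintype β] [Fintype γ]

lemma dist_nonneg'' (w : Ω → ℝ) (hw : ∀ ω, 0 ≤ w ω) (X : Ω → α) (a : α) :
    0 ≤ IT.dist w X a := by
  refine Finset.sum_nonneg fun ω _ => ?_
  split <;> simp [hw ω]

lemma dist_marg_fst (w : Ω → ℝ) (U : Ω → α) (V : Ω → γ) (c : γ) :
    IT.dist w V c = ∑ a, IT.dist w (fun ω => (U ω, V ω)) (a, c) := by
  classical
  unfold IT.dist
  rw [Finset.sum_comm]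
  refine Finset.sum_congr rfl fun ω _ => ?_
  by_cases h2 : V ω = c <;> simp [Prod.ext_iff, h2]

lemma dist_marg_mid (w : Ω → ℝ) (X : Ω → α) (Y : Ω → β) (Z : Ω → γ) (a : α) (c : γ) :
    IT.dist w (fun ω => (X ω, Z ω)) (a, c)
      = ∑ b, IT.dist w (fun ω => (X ω, (Y ω, Z ω))) (a, (b, c)) := by
  classical
  unfold IT.dist
  rw [Finset.sum_comm]
  refine Finset.sum_congr rfl fun ω _ => ?_
  by_cases h1 : X ω = a <;> by_cases h2 : Z ω = c <;> simp [Prod.ext_iff, h1, h2]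

lemma sum_dist (w : Ω → ℝ) (V : Ω → γ) : ∑ c, IT.dist w V c = ∑ ω, w ω := by
  classical
  unfold IT.dist
  rw [Finset.sum_comm]
  exact Finset.sum_congr rfl fun ω _ => by simp

lemma H_comp_equiv (w : Ω → ℝ) {α' β' : Type*} [Fintype α'] [Fintype β']
    (V : Ω → α') (e : α' ≃ β') : IT.H w (fun ω => e (V ω)) = IT.H w V := by
  classical
  have hd : ∀ a, IT.dist w (fun ω => e (V ω)) (e a) = IT.dist w V a := by
    intro a
    unfold IT.dist
    exact Finset.sum_congr rfl fun ω _ => by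
      by_cases h : V ω = a <;> simp [h]
  unfold IT.H
  rw [← Equiv.sum_comp e (fun b => IT.dist w (fun ω => e (V ω)) b *
    Real.logb 2 (IT.dist w (fun ω => e (V ω)) b))]
  simp only [hd]

end Aux


section FWD
open IT Finset

variable {Ω : Type*} [Fintype Ω] {α β γ : Type*} [Fintype α] [Fintype β] [Fintype γ]

lemma cmi_eq_zero_of_fac (w : Ω → ℝ) (hw : ∀ ω, 0 ≤ w ω)
    (X : Ω → α) (Y : Ω → β) (Z : Ω → γ)
    (hfac : ∀ a b c, IT.dist w (fun ω => (X ω, (Y ω, Z ω))) (a, (b, c)) * IT.dist w Z c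
      = IT.dist w (fun ω => (X ω, Z ω)) (a, c) * IT.dist w (fun ω => (Y ω, Z ω)) (b, c)) :
    IT.condMutInfo w X Y Z = 0 := by
  classical
  set q : α → β → γ → ℝ := fun a b c => IT.dist w (fun ω => (X ω, (Y ω, Z ω))) (a, (b, c))
    with hqdef
  have hq0 : ∀ a b c, 0 ≤ q a b c := fun a b c => dist_nonneg'' w hw _ _
  have hAC : ∀ a c, IT.dist w (fun ω => (X ω, Z ω)) (a, c) = ∑ b, q a b c := fun a c =>
    dist_marg_mid w X Y Z a c
  have hBC : ∀ b c, IT.dist w (fun ω => (Y ω, Z ω)) (b, c) = ∑ a, q a b c := fun b c =>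
    dist_marg_fst w X (fun ω => (Y ω, Z ω)) (b, c)
  have hC : ∀ c, IT.dist w Z c = ∑ b, ∑ a, q a b c := by
    intro c
    rw [dist_marg_fst w Y Z c]
    exact Finset.sum_congr rfl fun b _ => hBC b c
  have hfac' : ∀ a b c, q a b c * (∑ b' : β, ∑ a' : α, q a' b' c)
      = (∑ b' : β, q a b' c) * (∑ a' : α, q a' b c) := by
    intro a b c
    have := hfac a b c
    rwa [hAC, hBC, hC] at this
  -- pointwise key identity
  have key : ∀ a b c, q a b c * Real.logb 2 (q a b c)
      = q a b c * Real.logb 2 (∑ b' : β, q a b' c)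
        + q a b c * Real.logb 2 (∑ a' : α, q a' b c)
        - q a b c * Real.logb 2 (∑ b' : β, ∑ a' : α, q a' b' c) := by
    intro a b c
    rcases eq_or_lt_of_le (hq0 a b c) with h0 | hpos
    · rw [← h0]; ring
    · have hACpos : 0 < ∑ b' : β, q a b' c :=
        lt_of_lt_of_le hpos (Finset.single_le_sum (fun b' _ => hq0 a b' c) (mem_univ b))
      have hBCpos : 0 < ∑ a' : α, q a' b c :=
        lt_of_lt_of_le hpos (Finset.single_le_sum (fun a' _ => hq0 a' b c) (mem_univ a))
      have hCpos : 0 < ∑ b' : β, ∑ a' : α, q a' b' c :=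
        lt_of_lt_of_le hBCpos (Finset.single_le_sum
          (fun b' _ => Finset.sum_nonneg fun a' _ => hq0 a' b' c) (mem_univ b))
      have hlog : Real.log (q a b c) + Real.log (∑ b' : β, ∑ a' : α, q a' b' c)
          = Real.log (∑ b' : β, q a b' c) + Real.log (∑ a' : α, q a' b c) := by
        rw [← Real.log_mul (ne_of_gt hpos) (ne_of_gt hCpos),
          ← Real.log_mul (ne_of_gt hACpos) (ne_of_gt hBCpos), hfac' a b c]
      have hq : Real.log (q a b c) = Real.log (∑ b' : β, q a b' c)
          + Real.log (∑ a' : α, q a' b c)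
          - Real.log (∑ b' : β, ∑ a' : α, q a' b' c) := by linarith
      simp only [Real.logb, hq]
      ring
  -- entropies as triple sums
  have EXYZ : IT.H w (fun ω => (X ω, (Y ω, Z ω)))
      = -∑ a, ∑ b, ∑ c, q a b c * Real.logb 2 (q a b c) := by
    unfold IT.H
    simp only [Fintype.sum_prod_type]
    rfl
  have EXZ : IT.H w (fun ω => (X ω, Z ω))
      = -∑ a, ∑ c, (∑ b : β, q a b c) * Real.logb 2 (∑ b : β, q a b c) := by
    unfold IT.H
    simp only [Fintype.sum_prod_type, hAC]
  have EYZ : IT.H w (fun ω => (Y ω, Z ω))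
      = -∑ b, ∑ c, (∑ a : α, q a b c) * Real.logb 2 (∑ a : α, q a b c) := by
    unfold IT.H
    simp only [Fintype.sum_prod_type, hBC]
  have EC : IT.H w Z
      = -∑ c, (∑ b : β, ∑ a : α, q a b c) * Real.logb 2 (∑ b : β, ∑ a : α, q a b c) := by
    unfold IT.H
    simp only [hC]
  -- sum conversions
  have c2 : ∑ a, ∑ b, ∑ c, q a b c * Real.logb 2 (∑ b' : β, q a b' c)
      = ∑ a, ∑ c, (∑ b : β, q a b c) * Real.logb 2 (∑ b' : β, q a b' c) := by
    refine Finset.sum_congr rfl fun a _ => ?_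
    rw [Finset.sum_comm]
    exact Finset.sum_congr rfl fun c _ => (Finset.sum_mul ..).symm
  have c3 : ∑ a, ∑ b, ∑ c, q a b c * Real.logb 2 (∑ a' : α, q a' b c)
      = ∑ b, ∑ c, (∑ a : α, q a b c) * Real.logb 2 (∑ a' : α, q a' b c) := by
    rw [Finset.sum_comm]
    refine Finset.sum_congr rfl fun b _ => ?_
    rw [Finset.sum_comm]
    exact Finset.sum_congr rfl fun c _ => (Finset.sum_mul ..).symm
  have c4 : ∑ a, ∑ b, ∑ c, q a b c * Real.logb 2 (∑ b' : β, ∑ a' : α, q a' b' c)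
      = ∑ c, (∑ b : β, ∑ a : α, q a b c)
          * Real.logb 2 (∑ b' : β, ∑ a' : α, q a' b' c) := by
    rw [Finset.sum_comm]
    have : ∀ b, ∑ a, ∑ c, q a b c * Real.logb 2 (∑ b' : β, ∑ a' : α, q a' b' c)
        = ∑ c, ∑ a, q a b c * Real.logb 2 (∑ b' : β, ∑ a' : α, q a' b' c) :=
      fun b => Finset.sum_comm
    simp only [this]
    rw [Finset.sum_comm]
    refine Finset.sum_congr rfl fun c _ => ?_
    rw [Finset.sum_mul]
    exact Finset.sum_congr rfl fun b _ => (Finset.sum_mul ..).symm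
  have main : ∑ a, ∑ b, ∑ c, q a b c * Real.logb 2 (q a b c)
      = (∑ a, ∑ c, (∑ b : β, q a b c) * Real.logb 2 (∑ b' : β, q a b' c))
        + (∑ b, ∑ c, (∑ a : α, q a b c) * Real.logb 2 (∑ a' : α, q a' b c))
        - ∑ c, (∑ b : β, ∑ a : α, q a b c)
            * Real.logb 2 (∑ b' : β, ∑ a' : α, q a' b' c) := by
    rw [← c2, ← c3, ← c4]
    simp only [← Finset.sum_add_distrib, ← Finset.sum_sub_distrib]
    exact Finset.sum_congr rfl fun a _ => Finset.sum_congr rfl fun b _ =>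
      Finset.sum_congr rfl fun c _ => key a b c
  unfold IT.condMutInfo IT.condH
  rw [EXYZ, EXZ, EYZ, EC]
  have : ∀ a c, Real.logb 2 (∑ b : β, q a b c) = Real.logb 2 (∑ b' : β, q a b' c) :=
    fun a c => rfl
  rw [main]
  ring

end FWD


section BWD
open IT Finset

variable {Ω : Type*} [Fintype Ω] {α β γ : Type*} [Fintype α] [Fintype β] [Fintype γ]

lemma cmi_expand (w : Ω → ℝ) (X : Ω → α) (Y : Ω → β) (Z : Ω → γ) :
    IT.condMutInfo w X Y Z
      = ∑ a, ∑ b, ∑ c,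
          (fun a b c => IT.dist w (fun ω => (X ω, (Y ω, Z ω))) (a, (b, c))) a b c *
          (Real.logb 2 ((fun a b c => IT.dist w (fun ω => (X ω, (Y ω, Z ω))) (a, (b, c))) a b c)
           + Real.logb 2 (∑ b' : β, ∑ a' : α,
              (fun a b c => IT.dist w (fun ω => (X ω, (Y ω, Z ω))) (a, (b, c))) a' b' c)
           - Real.logb 2 (∑ b' : β,
              (fun a b c => IT.dist w (fun ω => (X ω, (Y ω, Z ω))) (a, (b, c))) a b' c)
           - Real.logb 2 (∑ a' : α,
              (fun a b c => IT.dist w (fun ω => (X ω, (Y ω, Z ω))) (a, (b, c))) a' b c)) := by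
  classical
  set q : α → β → γ → ℝ := fun a b c => IT.dist w (fun ω => (X ω, (Y ω, Z ω))) (a, (b, c))
    with hqdef
  have hAC : ∀ a c, IT.dist w (fun ω => (X ω, Z ω)) (a, c) = ∑ b, q a b c := fun a c =>
    dist_marg_mid w X Y Z a c
  have hBC : ∀ b c, IT.dist w (fun ω => (Y ω, Z ω)) (b, c) = ∑ a, q a b c := fun b c =>
    dist_marg_fst w X (fun ω => (Y ω, Z ω)) (b, c)
  have hC : ∀ c, IT.dist w Z c = ∑ b, ∑ a, q a b c := by
    intro c
    rw [dist_marg_fst w Y Z c]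
    exact Finset.sum_congr rfl fun b _ => hBC b c
  have EXYZ : IT.H w (fun ω => (X ω, (Y ω, Z ω)))
      = -∑ a, ∑ b, ∑ c, q a b c * Real.logb 2 (q a b c) := by
    unfold IT.H
    simp only [Fintype.sum_prod_type]
    rfl
  have EXZ : IT.H w (fun ω => (X ω, Z ω))
      = -∑ a, ∑ c, (∑ b : β, q a b c) * Real.logb 2 (∑ b : β, q a b c) := by
    unfold IT.H
    simp only [Fintype.sum_prod_type, hAC]
  have EYZ : IT.H w (fun ω => (Y ω, Z ω))
      = -∑ b, ∑ c, (∑ a : α, q a b c) * Real.logb 2 (∑ a : α, q a b c) := by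
    unfold IT.H
    simp only [Fintype.sum_prod_type, hBC]
  have EC : IT.H w Z
      = -∑ c, (∑ b : β, ∑ a : α, q a b c) * Real.logb 2 (∑ b : β, ∑ a : α, q a b c) := by
    unfold IT.H
    simp only [hC]
  have c2 : ∑ a, ∑ b, ∑ c, q a b c * Real.logb 2 (∑ b' : β, q a b' c)
      = ∑ a, ∑ c, (∑ b : β, q a b c) * Real.logb 2 (∑ b' : β, q a b' c) := by
    refine Finset.sum_congr rfl fun a _ => ?_
    rw [Finset.sum_comm]
    exact Finset.sum_congr rfl fun c _ => (Finset.sum_mul ..).symm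
  have c3 : ∑ a, ∑ b, ∑ c, q a b c * Real.logb 2 (∑ a' : α, q a' b c)
      = ∑ b, ∑ c, (∑ a : α, q a b c) * Real.logb 2 (∑ a' : α, q a' b c) := by
    rw [Finset.sum_comm]
    refine Finset.sum_congr rfl fun b _ => ?_
    rw [Finset.sum_comm]
    exact Finset.sum_congr rfl fun c _ => (Finset.sum_mul ..).symm
  have c4 : ∑ a, ∑ b, ∑ c, q a b c * Real.logb 2 (∑ b' : β, ∑ a' : α, q a' b' c)
      = ∑ c, (∑ b : β, ∑ a : α, q a b c)
          * Real.logb 2 (∑ b' : β, ∑ a' : α, q a' b' c) := by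
    rw [Finset.sum_comm]
    have h1 : ∀ b, ∑ a, ∑ c, q a b c * Real.logb 2 (∑ b' : β, ∑ a' : α, q a' b' c)
        = ∑ c, ∑ a, q a b c * Real.logb 2 (∑ b' : β, ∑ a' : α, q a' b' c) :=
      fun b => Finset.sum_comm
    simp only [h1]
    rw [Finset.sum_comm]
    refine Finset.sum_congr rfl fun c _ => ?_
    rw [Finset.sum_mul]
    exact Finset.sum_congr rfl fun b _ => (Finset.sum_mul ..).symm
  unfold IT.condMutInfo IT.condH
  rw [EXYZ, EXZ, EYZ, EC, ← c2, ← c3, ← c4]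
  simp only [← Finset.sum_add_distrib, ← Finset.sum_sub_distrib, ← Finset.sum_neg_distrib]
  exact Finset.sum_congr rfl fun a _ => Finset.sum_congr rfl fun b _ =>
    Finset.sum_congr rfl fun c _ => by ring

end BWD


section BWD2
open IT Finset

variable {Ω : Type*} [Fintype Ω] {α β γ : Type*} [Fintype α] [Fintype β] [Fintype γ]

lemma fac_of_cmi_eq_zero (w : Ω → ℝ) (hw : ∀ ω, 0 ≤ w ω) (hw1 : ∑ ω, w ω = 1)
    (X : Ω → α) (Y : Ω → β) (Z : Ω → γ)
    (hcmi : IT.condMutInfo w X Y Z = 0) :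
    ∀ a b c, IT.dist w (fun ω => (X ω, (Y ω, Z ω))) (a, (b, c)) * IT.dist w Z c
      = IT.dist w (fun ω => (X ω, Z ω)) (a, c) * IT.dist w (fun ω => (Y ω, Z ω)) (b, c) := by
  classical
  set q : α → β → γ → ℝ := fun a b c => IT.dist w (fun ω => (X ω, (Y ω, Z ω))) (a, (b, c))
    with hqdef
  have hq0 : ∀ a b c, 0 ≤ q a b c := fun a b c => dist_nonneg'' w hw _ _
  have hAC : ∀ a c, IT.dist w (fun ω => (X ω, Z ω)) (a, c) = ∑ b, q a b c := fun a c =>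
    dist_marg_mid w X Y Z a c
  have hBC : ∀ b c, IT.dist w (fun ω => (Y ω, Z ω)) (b, c) = ∑ a, q a b c := fun b c =>
    dist_marg_fst w X (fun ω => (Y ω, Z ω)) (b, c)
  have hC : ∀ c, IT.dist w Z c = ∑ b, ∑ a, q a b c := by
    intro c
    rw [dist_marg_fst w Y Z c]
    exact Finset.sum_congr rfl fun b _ => hBC b c
  -- abbreviations
  set A : α → γ → ℝ := fun a c => ∑ b' : β, q a b' c with hAdef
  set B : β → γ → ℝ := fun b c => ∑ a' : α, q a' b c with hBdef
  set D : γ → ℝ := fun c => ∑ b' : β, ∑ a' : α, q a' b' c with hDdef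
  have hA0 : ∀ a c, 0 ≤ A a c := fun a c => Finset.sum_nonneg fun b _ => hq0 a b c
  have hB0 : ∀ b c, 0 ≤ B b c := fun b c => Finset.sum_nonneg fun a _ => hq0 a b c
  have hD0 : ∀ c, 0 ≤ D c := fun c => Finset.sum_nonneg fun b _ => hB0 b c
  have hqA : ∀ a b c, q a b c ≤ A a c := fun a b c =>
    Finset.single_le_sum (fun b' _ => hq0 a b' c) (mem_univ b)
  have hqB : ∀ a b c, q a b c ≤ B b c := fun a b c =>
    Finset.single_le_sum (fun a' _ => hq0 a' b c) (mem_univ a)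
  have hBD : ∀ b c, B b c ≤ D c := fun b c =>
    Finset.single_le_sum (fun b' _ => hB0 b' c) (mem_univ b)
  have hAD : ∀ a c, A a c ≤ D c := by
    intro a c
    refine le_trans (Finset.sum_le_sum fun b _ => hqB a b c) ?_
    exact le_of_eq rfl
  set r : α → β → γ → ℝ := fun a b c => A a c * B b c / D c with hrdef
  have hr0 : ∀ a b c, 0 ≤ r a b c := fun a b c =>
    div_nonneg (mul_nonneg (hA0 a c) (hB0 b c)) (hD0 c)
  set r' : α → β → γ → ℝ := fun a b c => if 0 < q a b c then r a b c else 0 with hr'def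
  set F : α → β → γ → ℝ := fun a b c => q a b c *
    (Real.log (q a b c) + Real.log (D c) - Real.log (A a c) - Real.log (B b c)) with hFdef
  have l2 : Real.log 2 ≠ 0 := ne_of_gt (Real.log_pos (by norm_num))
  -- log-form positivity facts
  have hlogfacts : ∀ a b c, 0 < q a b c →
      0 < A a c ∧ 0 < B b c ∧ 0 < D c ∧ 0 < r a b c ∧
        F a b c = q a b c * (Real.log (q a b c) - Real.log (r a b c)) := by
    intro a b c hq
    have hA : 0 < A a c := lt_of_lt_of_le hq (hqA a b c)
    have hB : 0 < B b c := lt_of_lt_of_le hq (hqB a b c)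
    have hD : 0 < D c := lt_of_lt_of_le hB (hBD b c)
    have hr : 0 < r a b c := div_pos (mul_pos hA hB) hD
    refine ⟨hA, hB, hD, hr, ?_⟩
    have : Real.log (r a b c) = Real.log (A a c) + Real.log (B b c) - Real.log (D c) := by
      rw [hrdef]
      simp only
      rw [Real.log_div (ne_of_gt (mul_pos hA hB)) (ne_of_gt hD),
        Real.log_mul (ne_of_gt hA) (ne_of_gt hB)]
    rw [hFdef]
    simp only
    rw [this]
    ring
  -- sum of F is zero
  have hF3 : ∑ a, ∑ b, ∑ c, F a b c = 0 := by
    have hptw : ∀ a b c, F a b c = Real.log 2 *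
        (q a b c * (Real.logb 2 (q a b c) + Real.logb 2 (D c)
          - Real.logb 2 (A a c) - Real.logb 2 (B b c))) := by
      intro a b c
      simp only [Real.logb, hFdef]
      field_simp
    simp only [hptw, ← Finset.mul_sum]
    have h0 := cmi_expand w X Y Z
    rw [hcmi] at h0
    simp only [] at h0
    rw [← h0, mul_zero]
  -- totals
  have htot : ∑ c, D c = 1 := by
    rw [← hw1, ← sum_dist w Z]
    exact Finset.sum_congr rfl fun c _ => (hC c).symm
  have hsumq : ∑ a, ∑ b, ∑ c, q a b c = 1 := by
    rw [← htot]
    have e1 : ∀ a : α, ∑ b, ∑ c, q a b c = ∑ c, ∑ b, q a b c := fun a => Finset.sum_comm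
    simp only [e1]
    rw [Finset.sum_comm]
    exact Finset.sum_congr rfl fun c _ => Finset.sum_comm
  have hsumr : ∑ a, ∑ b, ∑ c, r a b c = 1 := by
    have hcc : ∀ c, ∑ a, ∑ b, r a b c = D c := by
      intro c
      by_cases hD : D c = 0
      · have hz : ∀ a b, r a b c = 0 := by
          intro a b; rw [hrdef]; simp only; rw [hD, div_zero]
        simp [hz, hD]
      · have hstep : ∑ a, ∑ b, r a b c = (∑ a, A a c) * (∑ b, B b c) / D c := by
          rw [Finset.sum_mul_sum]
          simp only [Finset.sum_div]
          rfl
        rw [hstep]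
        have e1 : ∑ a, A a c = D c := Finset.sum_comm
        have e2 : ∑ b, B b c = D c := rfl
        rw [e1, e2]
        field_simp
    have e1 : ∀ a : α, ∑ b, ∑ c, r a b c = ∑ c, ∑ b, r a b c := fun a => Finset.sum_comm
    simp only [e1]
    rw [Finset.sum_comm, ← htot]
    exact Finset.sum_congr rfl fun c _ => hcc c
  have hr'le : ∀ a b c, r' a b c ≤ r a b c := by
    intro a b c; rw [hr'def]; simp only
    split_ifs with h
    · exact le_rfl
    · exact hr0 a b c
  have hle1 : ∀ a b c, q a b c - r' a b c ≤ F a b c := by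
    intro a b c
    rcases eq_or_lt_of_le (hq0 a b c) with h0 | hpos
    · rw [hr'def, hFdef]; simp only
      rw [if_neg (by rw [← h0]; exact lt_irrefl 0), ← h0]
      simp
    · obtain ⟨hA, hB, hD, hr, hFlog⟩ := hlogfacts a b c hpos
      rw [hr'def]; simp only
      rw [if_pos hpos, hFlog]
      have hlog := Real.log_le_sub_one_of_pos (div_pos hr hpos)
      rw [Real.log_div (ne_of_gt hr) (ne_of_gt hpos)] at hlog
      have h2 : q a b c * (Real.log (r a b c) - Real.log (q a b c))
          ≤ q a b c * (r a b c / q a b c - 1) :=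
        mul_le_mul_of_nonneg_left hlog (le_of_lt hpos)
      have h3 : q a b c * (r a b c / q a b c - 1) = r a b c - q a b c := by
        field_simp
      have h5 : q a b c * (Real.log (r a b c) - Real.log (q a b c))
          = -(q a b c * (Real.log (q a b c) - Real.log (r a b c))) := by ring
      linarith
  -- global equalities
  have hSr'le : ∑ a, ∑ b, ∑ c, r' a b c ≤ 1 := by
    rw [← hsumr]
    exact Finset.sum_le_sum fun a _ => Finset.sum_le_sum fun b _ =>
      Finset.sum_le_sum fun c _ => hr'le a b c
  have hSsub : ∑ a, ∑ b, ∑ c, (q a b c - r' a b c)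
      = 1 - ∑ a, ∑ b, ∑ c, r' a b c := by
    simp only [Finset.sum_sub_distrib]
    rw [hsumq]
  have hSle : ∑ a, ∑ b, ∑ c, (q a b c - r' a b c) ≤ 0 := by
    rw [← hF3]
    exact Finset.sum_le_sum fun a _ => Finset.sum_le_sum fun b _ =>
      Finset.sum_le_sum fun c _ => hle1 a b c
  have hSr'eq : ∑ a, ∑ b, ∑ c, r' a b c = 1 := le_antisymm hSr'le (by linarith)
  have hSzero : ∑ a, ∑ b, ∑ c, (q a b c - r' a b c) = 0 := by rw [hSsub, hSr'eq]; ring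
  -- termwise equalities via product-type sums
  have conv : ∀ f : α → β → γ → ℝ,
      ∑ x : α × β × γ, f x.1 x.2.1 x.2.2 = ∑ a, ∑ b, ∑ c, f a b c := by
    intro f
    simp only [Fintype.sum_prod_type]
  have heq1 : ∀ a b c, q a b c - r' a b c = F a b c := by
    have h := (Finset.sum_eq_sum_iff_of_le (s := (Finset.univ : Finset (α × β × γ)))
      (f := fun x : α × β × γ => q x.1 x.2.1 x.2.2 - r' x.1 x.2.1 x.2.2)
      (g := fun x : α × β × γ => F x.1 x.2.1 x.2.2)
      (fun x _ => hle1 x.1 x.2.1 x.2.2)).mp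
    intro a b c
    refine h ?_ (a, b, c) (mem_univ _)
    rw [conv (fun a b c => q a b c - r' a b c), conv F, hSzero, hF3]
  have heq2 : ∀ a b c, r' a b c = r a b c := by
    have h := (Finset.sum_eq_sum_iff_of_le (s := (Finset.univ : Finset (α × β × γ)))
      (f := fun x : α × β × γ => r' x.1 x.2.1 x.2.2)
      (g := fun x : α × β × γ => r x.1 x.2.1 x.2.2)
      (fun x _ => hr'le x.1 x.2.1 x.2.2)).mp
    intro a b c
    refine h ?_ (a, b, c) (mem_univ _)
    rw [conv r', conv r, hSr'eq, hsumr]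
  -- conclusion
  intro a b c
  rw [hAC, hBC, hC]
  show q a b c * D c = A a c * B b c
  rcases eq_or_lt_of_le (hq0 a b c) with h0 | hpos
  · have hr'0 : r' a b c = 0 := by
      rw [hr'def]; simp only; rw [if_neg (by rw [← h0]; exact lt_irrefl 0)]
    have hreq : r a b c = 0 := by rw [← heq2 a b c, hr'0]
    rw [← h0, zero_mul]
    by_cases hD : D c = 0
    · have hA' : A a c = 0 := le_antisymm (hD ▸ hAD a c) (hA0 a c)
      rw [hA', zero_mul]
    · rcases div_eq_zero_iff.mp hreq with h | h
      · exact h.symm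
      · exact absurd h hD
  · obtain ⟨hA, hB, hD, hr, hFlog⟩ := hlogfacts a b c hpos
    have hFeq : q a b c - r a b c
        = q a b c * (Real.log (q a b c) - Real.log (r a b c)) := by
      have := heq1 a b c
      rw [hr'def] at this; simp only at this
      rw [if_pos hpos, hFlog] at this
      exact this
    have hqr : r a b c = q a b c := by
      by_contra hne
      have hx : r a b c / q a b c ≠ 1 := by
        intro h
        exact hne ((div_eq_one_iff_eq (ne_of_gt hpos)).mp h)
      have hstrict := Real.log_lt_sub_one_of_pos (div_pos hr hpos) hx
      rw [Real.log_div (ne_of_gt hr) (ne_of_gt hpos)] at hstrict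
      have h2 : q a b c * (Real.log (r a b c) - Real.log (q a b c))
          < q a b c * (r a b c / q a b c - 1) :=
        mul_lt_mul_of_pos_left hstrict hpos
      have h3 : q a b c * (r a b c / q a b c - 1) = r a b c - q a b c := by
        field_simp
      have h5 : q a b c * (Real.log (r a b c) - Real.log (q a b c))
          = -(q a b c * (Real.log (q a b c) - Real.log (r a b c))) := by ring
      linarith
    have := (div_eq_iff (ne_of_gt hD)).mp hqr
    linarith [this]

end BWD2



section MLSwap
open IT Finset

variable {XA YA ZA : Type*} [Fintype XA] [Fintype YA] [Fintype ZA]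
  {n : ℕ} {α β γ : Type*} [Fintype α] [Fintype β] [Fintype γ]

/-- Exchange the `Y`-components of two sequences on the index set `S`. -/
def swapY (S : Fin n → Prop) [DecidablePred S] (ω ω' : Fin n → XA × YA × ZA) :
    Fin n → XA × YA × ZA :=
  fun s => if S s then ((ω s).1, (ω' s).2.1, (ω s).2.2) else ω s

lemma ml_swap (p : XA × YA × ZA → ℝ) (hp0 : ∀ a, 0 ≤ p a)
    (hswap : ∀ x x' y y' z, p (x, y, z) * p (x', y', z) = p (x, y', z) * p (x', y, z))
    (A : (Fin n → XA × YA × ZA) → α) (B : (Fin n → XA × YA × ZA) → β)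
    (C : (Fin n → XA × YA × ZA) → γ)
    (S : Fin n → Prop) [DecidablePred S]
    (hW : ∀ ω ω', C ω = C ω' → ∀ s, S s → (ω s).2.2 = (ω' s).2.2 ∨ (ω s).2.1 = (ω' s).2.1)
    (hA : ∀ ω ω', C ω = C ω' → A (swapY S ω ω') = A ω)
    (hB : ∀ ω ω', C ω = C ω' → B (swapY S ω ω') = B ω')
    (hC : ∀ ω ω', C ω = C ω' → C (swapY S ω ω') = C ω) :
    IT.condMutInfo (iidW p n) A B C = 0 := by
  classical
  set w : (Fin n → XA × YA × ZA) → ℝ := iidW p n with hwdef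
  have hw0 : ∀ ω, 0 ≤ w ω := fun ω => Finset.prod_nonneg fun s _ => hp0 _
  apply cmi_eq_zero_of_fac w hw0 A B C
  intro a b c
  have hinv : ∀ ω ω' : Fin n → XA × YA × ZA,
      swapY S (swapY S ω ω') (swapY S ω' ω) = ω := by
    intro ω ω'
    funext s
    unfold swapY
    by_cases h : S s <;> simp [h]
  have hwgt : ∀ ω ω', C ω = C ω' →
      w (swapY S ω ω') * w (swapY S ω' ω) = w ω * w ω' := by
    intro ω ω' hcc
    rw [hwdef]
    unfold iidW
    rw [← Finset.prod_mul_distrib, ← Finset.prod_mul_distrib]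
    refine Finset.prod_congr rfl fun s _ => ?_
    unfold swapY
    by_cases h : S s
    · simp only [if_pos h]
      rcases hW ω ω' hcc s h with hz | hy
      · rw [show ω s = ((ω s).1, (ω s).2.1, (ω s).2.2) from rfl,
          show ω' s = ((ω' s).1, (ω' s).2.1, (ω' s).2.2) from rfl, ← hz]
        exact (hswap (ω s).1 (ω' s).1 (ω s).2.1 (ω' s).2.1 (ω s).2.2).symm
      · rw [show ω s = ((ω s).1, (ω s).2.1, (ω s).2.2) from rfl,
          show ω' s = ((ω' s).1, (ω' s).2.1, (ω' s).2.2) from rfl, hy]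
    · simp only [if_neg h]
  -- the involution on pairs
  set Φ : ((Fin n → XA × YA × ZA) × (Fin n → XA × YA × ZA)) →
      ((Fin n → XA × YA × ZA) × (Fin n → XA × YA × ZA)) :=
    fun q => (swapY S q.1 q.2, swapY S q.2 q.1) with hΦdef
  have hΦinv : ∀ q, Φ (Φ q) = q := by
    intro q
    rw [hΦdef]
    simp only
    exact Prod.ext (hinv q.1 q.2) (hinv q.2 q.1)
  set e : ((Fin n → XA × YA × ZA) × (Fin n → XA × YA × ZA)) ≃
      ((Fin n → XA × YA × ZA) × (Fin n → XA × YA × ZA)) :=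
    ⟨Φ, Φ, fun q => hΦinv q, fun q => hΦinv q⟩ with hedef
  unfold IT.dist
  rw [Finset.sum_mul_sum, Finset.sum_mul_sum]
  beta_reduce
  rw [← Finset.sum_product', ← Finset.sum_product', Finset.univ_product_univ]
  refine (Fintype.sum_equiv e _ _ ?_).symm
  rintro ⟨ω, ω'⟩
  simp only [hedef, hΦdef, Equiv.coe_fn_mk]
  by_cases hcc : C ω = c ∧ C ω' = c
  · obtain ⟨h1, h2⟩ := hcc
    have hce : C ω = C ω' := h1.trans h2.symm
    rw [hA ω ω' hce, hB ω ω' hce, hC ω ω' hce, hC ω' ω hce.symm]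
    by_cases ha : A ω = a <;> by_cases hb : B ω' = b <;>
      simp [Prod.ext_iff, ha, hb, h1, h2, hwgt ω ω' hce]
  · have hz : (if (A ω, C ω) = (a, c) then w ω else 0) *
        (if (B ω', C ω') = (b, c) then w ω' else 0) = 0 := by
      rcases not_and_or.mp hcc with h | h
      · rw [if_neg (show ¬(A ω, C ω) = (a, c) from by simp [Prod.ext_iff]; tauto), zero_mul]
      · rw [if_neg (show ¬(B ω', C ω') = (b, c) from by simp [Prod.ext_iff]; tauto),
          mul_zero]
    rw [hz]
    have hz2 : ¬ ((C (swapY S ω ω') = c) ∧ (C (swapY S ω' ω) = c)) := by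
      rintro ⟨k1, k2⟩
      have hce : C (swapY S ω ω') = C (swapY S ω' ω) := k1.trans k2.symm
      have e1 := hC _ _ hce
      have e2 := hC _ _ hce.symm
      rw [hinv ω ω'] at e1
      rw [hinv ω' ω] at e2
      exact hcc ⟨e1 ▸ k1, e2 ▸ k2⟩
    rcases not_and_or.mp hz2 with h | h
    · rw [if_neg (show ¬(A (swapY S ω ω'), (B (swapY S ω ω'), C (swapY S ω ω'))) = (a, (b, c))
          from by simp [Prod.ext_iff]; tauto), zero_mul]
    · rw [if_neg h, mul_zero]

end MLSwap


section Helpers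
variable {n : ℕ} {T : Type*}

lemma below_ext {m : ℕ} {u v : Fin n → T} (h : below m u = below m v) :
    ∀ s : Fin n, s.val < m → u s = v s := by
  intro s hs
  have := congrFun h s
  simp only [below, if_pos hs] at this
  exact Option.some.inj this

lemma below_congr {m : ℕ} {u v : Fin n → T} (h : ∀ s : Fin n, s.val < m → u s = v s) :
    below m u = below m v := by
  funext s
  unfold below
  split_ifs with hs
  · rw [h s hs]
  · rfl

lemma above_ext {m : ℕ} {u v : Fin n → T} (h : above m u = above m v) :
    ∀ s : Fin n, m < s.val → u s = v s := by
  intro s hs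
  have := congrFun h s
  simp only [above, if_pos hs] at this
  exact Option.some.inj this

lemma above_congr {m : ℕ} {u v : Fin n → T} (h : ∀ s : Fin n, m < s.val → u s = v s) :
    above m u = above m v := by
  funext s
  unfold above
  split_ifs with hs
  · rw [h s hs]
  · rfl

lemma fromIdx_ext {m : ℕ} {u v : Fin n → T} (h : fromIdx m u = fromIdx m v) :
    ∀ s : Fin n, m ≤ s.val → u s = v s := by
  intro s hs
  have := congrFun h s
  simp only [fromIdx, if_pos hs] at this
  exact Option.some.inj this

lemma fromIdx_congr {m : ℕ} {u v : Fin n → T} (h : ∀ s : Fin n, m ≤ s.val → u s = v s) :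
    fromIdx m u = fromIdx m v := by
  funext s
  unfold fromIdx
  split_ifs with hs
  · rw [h s hs]
  · rfl

lemma trunc_ext {K : ℕ} {γ : Fin K → Type*} {l : ℕ} {f g : (k : Fin K) → γ k}
    (h : trunc l f = trunc l g) : ∀ k : Fin K, k.val < l → f k = g k := by
  intro k hk
  have := congrFun h k
  simp only [trunc, if_pos hk] at this
  exact Option.some.inj this

lemma trunc_congr {K : ℕ} {γ : Fin K → Type*} {l : ℕ} {f g : (k : Fin K) → γ k}
    (h : ∀ k : Fin K, k.val < l → f k = g k) : trunc l f = trunc l g := by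
  funext k
  unfold trunc
  split_ifs with hk
  · rw [h k hk]
  · rfl

end Helpers

section Comm
open IT
variable {Ω : Type*} [Fintype Ω] {α β γ : Type*} [Fintype α] [Fintype β] [Fintype γ]

lemma cmi_comm (w : Ω → ℝ) (X : Ω → α) (Y : Ω → β) (Z : Ω → γ) :
    IT.condMutInfo w X Y Z = IT.condMutInfo w Y X Z := by
  have h1 : IT.H w (fun ω => (X ω, (Y ω, Z ω))) = IT.H w (fun ω => (Y ω, (X ω, Z ω))) := by
    have h := H_comp_equiv w (fun ω => (Y ω, (X ω, Z ω)))
      (⟨fun q => (q.2.1, (q.1, q.2.2)), fun q => (q.2.1, (q.1, q.2.2)),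
        fun q => rfl, fun q => rfl⟩ : β × (α × γ) ≃ α × (β × γ))
    simp only [Equiv.coe_fn_mk] at h
    exact h
  unfold IT.condMutInfo IT.condH
  rw [h1]
  ring

end Comm


section SwapLems
variable {XA YA ZA : Type*} {n : ℕ}

lemma swapY_fst (S : Fin n → Prop) [DecidablePred S] (ω ω' : Fin n → XA × YA × ZA)
    (s : Fin n) : ((swapY S ω ω') s).1 = (ω s).1 := by
  unfold swapY; split_ifs <;> rfl

lemma swapY_z (S : Fin n → Prop) [DecidablePred S] (ω ω' : Fin n → XA × YA × ZA)
    (s : Fin n) : ((swapY S ω ω') s).2.2 = (ω s).2.2 := by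
  unfold swapY; split_ifs <;> rfl

lemma swapY_y_mem (S : Fin n → Prop) [DecidablePred S] (ω ω' : Fin n → XA × YA × ZA)
    (s : Fin n) (h : S s) : ((swapY S ω ω') s).2.1 = (ω' s).2.1 := by
  unfold swapY; rw [if_pos h]

lemma swapY_y_not (S : Fin n → Prop) [DecidablePred S] (ω ω' : Fin n → XA × YA × ZA)
    (s : Fin n) (h : ¬ S s) : ((swapY S ω ω') s).2.1 = (ω s).2.1 := by
  unfold swapY; rw [if_neg h]

end SwapLems


/-- **Corollary (degraded sources, x-encoder observing both `X` and `Z`).**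
If `X -∘- Z -∘- Y` and `J_x^l = f_x^l(Xⁿ, Zⁿ, J_x^{[1:l-1]}, J_y^{[1:l-1]})`, then the
four stated Markov chains hold. -/
theorem two_node_interactive_markov_degraded
    {XA YA ZA : Type} [Fintype XA] [Fintype YA] [Fintype ZA]
    (p : XA × YA × ZA → ℝ) (hp : IsPMF p)
    -- source Markov chain X -∘- Z -∘- Y, i.e. I(X;Y|Z) = 0
    (hmc : IT.condMutInfo p (fun a => a.1) (fun a => a.2.1) (fun a => a.2.2) = 0)
    {n K : ℕ} (mx my : Fin K → ℕ)
    (Jx : (l : Fin K) → (Fin n → XA × YA × ZA) → Fin (mx l))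
    (Jy : (l : Fin K) → (Fin n → XA × YA × ZA) → Fin (my l))
    -- J_x^l = f_x^l(Xⁿ, Zⁿ, J_x^{[1:l-1]}, J_y^{[1:l-1]})
    (hJx : ∀ l : Fin K, ∃ f : (Fin n → XA) → (Fin n → ZA) →
        ((k : Fin K) → k.val < l.val → Fin (mx k)) →
        ((k : Fin K) → k.val < l.val → Fin (my k)) → Fin (mx l),
      ∀ ω, Jx l ω = f (fun t => (ω t).1) (fun t => (ω t).2.2)
        (fun k _ => Jx k ω) (fun k _ => Jy k ω))
    -- J_y^l = f_y^l(Yⁿ, J_x^{[1:l]}, J_y^{[1:l-1]})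
    (hJy : ∀ l : Fin K, ∃ f : (Fin n → YA) →
        ((k : Fin K) → k.val ≤ l.val → Fin (mx k)) →
        ((k : Fin K) → k.val < l.val → Fin (my k)) → Fin (my l),
      ∀ ω, Jy l ω = f (fun t => (ω t).2.1) (fun k _ => Jx k ω) (fun k _ => Jy k ω))
    (hK : 0 < K) :
    ∀ t : Fin n,
      -- (1) (J_x^1, Z_{[1:t-1]}, Y_{[t+1:n]}) -∘- Z_t -∘- Y_t
      IT.condMutInfo (iidW p n)
        (fun ω => (Jx ⟨0, hK⟩ ω, below t.val (fun s => (ω s).2.2),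
          above t.val (fun s => (ω s).2.1)))
        (fun ω => (ω t).2.1)
        (fun ω => (ω t).2.2) = 0 ∧
      -- (2) (J_x^l, Z_{[t+1:n]}) -∘- (J_x^{[1:l-1]}, J_y^{[1:l-1]}, Z_{[1:t]}, Y_{[t+1:n]}) -∘- Y_t
      (∀ l : Fin K,
        IT.condMutInfo (iidW p n)
          (fun ω => (Jx l ω, above t.val (fun s => (ω s).2.2)))
          (fun ω => (ω t).2.1)
          (fun ω => (trunc l.val (fun k => Jx k ω), trunc l.val (fun k => Jy k ω),
            below (t.val + 1) (fun s => (ω s).2.2), above t.val (fun s => (ω s).2.1))) = 0) ∧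
      -- (3) (J_y^l, Y_{[1:t-1]}) -∘- (J_x^{[1:l]}, J_y^{[1:l-1]}, Z_{[1:t-1]}, Y_{[t:n]}) -∘- (X_t, Z_t)
      (∀ l : Fin K,
        IT.condMutInfo (iidW p n)
          (fun ω => (Jy l ω, below t.val (fun s => (ω s).2.1)))
          (fun ω => ((ω t).1, (ω t).2.2))
          (fun ω => (trunc (l.val + 1) (fun k => Jx k ω), trunc l.val (fun k => Jy k ω),
            below t.val (fun s => (ω s).2.2), fromIdx t.val (fun s => (ω s).2.1))) = 0) ∧
      -- (4) (Z_{[t+1:n]}, Xⁿ) -∘- (J_x^{[1:K]}, J_y^{[1:K]}, Z_{[1:t]}, Y_{[t+1:n]}) -∘- Y_{[1:t]}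
      IT.condMutInfo (iidW p n)
        (fun ω => (above t.val (fun s => (ω s).2.2), fun s => (ω s).1))
        (fun ω => below (t.val + 1) (fun s => (ω s).2.1))
        (fun ω => ((fun k => Jx k ω), (fun k => Jy k ω),
          below (t.val + 1) (fun s => (ω s).2.2), above t.val (fun s => (ω s).2.1))) = 0 := by
    classical
  obtain ⟨hp0, hp1⟩ := hp
  have fac := fac_of_cmi_eq_zero p hp0 hp1 (fun a => a.1) (fun a => a.2.1) (fun a => a.2.2) hmc
  have hid : ∀ x y z, IT.dist p (fun a : XA × YA × ZA => (a.1, (a.2.1, a.2.2))) (x, (y, z))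
      = p (x, y, z) := by
    intro x y z
    unfold IT.dist
    rw [Finset.sum_eq_single (x, y, z)]
    · simp
    · intro a _ hne
      rw [if_neg]
      intro hcon
      obtain ⟨e1, e2, e3⟩ : a.1 = x ∧ a.2.1 = y ∧ a.2.2 = z := by
        simpa [Prod.ext_iff] using hcon
      exact hne (by rw [← e1, ← e2, ← e3])
    · intro hv; exact absurd (Finset.mem_univ _) hv
  have hple : ∀ v : XA × YA × ZA, p v ≤ IT.dist p (fun a : XA × YA × ZA => a.2.2) v.2.2 := by
    intro v
    have h := Finset.single_le_sum
      (f := fun a : XA × YA × ZA => if a.2.2 = v.2.2 then p a else 0)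
      (fun a _ => by by_cases h : a.2.2 = v.2.2 <;> simp [h, hp0 a]) (Finset.mem_univ v)
    simpa [IT.dist] using h
  have hsw : ∀ x x' y y' z, p (x, y, z) * p (x', y', z) = p (x, y', z) * p (x', y, z) := by
    intro x x' y y' z
    by_cases hz : IT.dist p (fun a : XA × YA × ZA => a.2.2) z = 0
    · have h0 : ∀ x0 y0, p (x0, y0, z) = 0 := fun x0 y0 =>
        le_antisymm (le_of_le_of_eq (hple (x0, y0, z)) hz) (hp0 _)
      simp [h0]
    · have h1 := fac x y z
      have h2 := fac x' y' z
      have h3 := fac x y' z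
      have h4 := fac x' y z
      beta_reduce at h1 h2 h3 h4
      rw [hid] at h1 h2 h3 h4
      apply mul_right_cancel₀ (mul_ne_zero hz hz)
      calc p (x, y, z) * p (x', y', z) *
            (IT.dist p (fun a : XA × YA × ZA => a.2.2) z *
              IT.dist p (fun a : XA × YA × ZA => a.2.2) z)
          = (p (x, y, z) * IT.dist p (fun a : XA × YA × ZA => a.2.2) z) *
            (p (x', y', z) * IT.dist p (fun a : XA × YA × ZA => a.2.2) z) := by ring
        _ = (IT.dist p (fun a : XA × YA × ZA => (a.1, a.2.2)) (x, z) *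
              IT.dist p (fun a : XA × YA × ZA => (a.2.1, a.2.2)) (y, z)) *
            (IT.dist p (fun a : XA × YA × ZA => (a.1, a.2.2)) (x', z) *
              IT.dist p (fun a : XA × YA × ZA => (a.2.1, a.2.2)) (y', z)) := by rw [h1, h2]
        _ = (IT.dist p (fun a : XA × YA × ZA => (a.1, a.2.2)) (x, z) *
              IT.dist p (fun a : XA × YA × ZA => (a.2.1, a.2.2)) (y', z)) *
            (IT.dist p (fun a : XA × YA × ZA => (a.1, a.2.2)) (x', z) *
              IT.dist p (fun a : XA × YA × ZA => (a.2.1, a.2.2)) (y, z)) := by ring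
        _ = (p (x, y', z) * IT.dist p (fun a : XA × YA × ZA => a.2.2) z) *
            (p (x', y, z) * IT.dist p (fun a : XA × YA × ZA => a.2.2) z) := by rw [h3, h4]
        _ = p (x, y', z) * p (x', y, z) *
            (IT.dist p (fun a : XA × YA × ZA => a.2.2) z *
              IT.dist p (fun a : XA × YA × ZA => a.2.2) z) := by ring
  -- transfer of messages along a y-swap
  have Jtr : ∀ m : ℕ, ∀ ω ω' ω'' : Fin n → XA × YA × ZA,
      (∀ s, (ω'' s).1 = (ω s).1) → (∀ s, (ω'' s).2.2 = (ω s).2.2) →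
      (∀ s, (ω'' s).2.1 = (ω' s).2.1) →
      (∀ k : Fin K, k.val < m → Jx k ω = Jx k ω') →
      (∀ k : Fin K, k.val < m → Jy k ω = Jy k ω') →
      (∀ k : Fin K, k.val < m → Jy k ω'' = Jy k ω) ∧
      (∀ k : Fin K, k.val ≤ m → Jx k ω'' = Jx k ω) := by
    intro m
    induction m with
    | zero =>
      intro ω ω' ω'' hx hz hy hax hay
      refine ⟨fun k hk => absurd hk (Nat.not_lt_zero _), fun k hk => ?_⟩
      obtain ⟨f, hf⟩ := hJx k
      rw [hf ω'', hf ω]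
      have e1 : (fun s => (ω'' s).1) = fun s => (ω s).1 := funext hx
      have e2 : (fun s => (ω'' s).2.2) = fun s => (ω s).2.2 := funext hz
      have e3 : (fun (j : Fin K) (_ : j.val < k.val) => Jx j ω'')
          = fun (j : Fin K) (_ : j.val < k.val) => Jx j ω := by
        funext j hj
        exact absurd hj (by omega)
      have e4 : (fun (j : Fin K) (_ : j.val < k.val) => Jy j ω'')
          = fun (j : Fin K) (_ : j.val < k.val) => Jy j ω := by
        funext j hj
        exact absurd hj (by omega)
      rw [e1, e2, e3, e4]
    | succ m IH =>
      intro ω ω' ω'' hx hz hy hax hay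
      obtain ⟨IHy, IHx⟩ := IH ω ω' ω'' hx hz hy
        (fun k hk => hax k (Nat.lt_succ_of_lt hk)) (fun k hk => hay k (Nat.lt_succ_of_lt hk))
      have Hy : ∀ k : Fin K, k.val < m + 1 → Jy k ω'' = Jy k ω := by
        intro k hk
        rcases Nat.lt_succ_iff_lt_or_eq.mp hk with h | h
        · exact IHy k h
        · obtain ⟨f, hf⟩ := hJy k
          have key : Jy k ω'' = Jy k ω' := by
            rw [hf ω'', hf ω']
            have e1 : (fun s => (ω'' s).2.1) = fun s => (ω' s).2.1 := funext hy
            have e2 : (fun (j : Fin K) (_ : j.val ≤ k.val) => Jx j ω'')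
                = fun (j : Fin K) (_ : j.val ≤ k.val) => Jx j ω' := by
              funext j hj
              rw [IHx j (by omega), hax j (by omega)]
            have e3 : (fun (j : Fin K) (_ : j.val < k.val) => Jy j ω'')
                = fun (j : Fin K) (_ : j.val < k.val) => Jy j ω' := by
              funext j hj
              rw [IHy j (by omega), hay j (by omega)]
            rw [e1, e2, e3]
          rw [key, ← hay k hk]
      refine ⟨Hy, fun k hk => ?_⟩
      obtain ⟨f, hf⟩ := hJx k
      rw [hf ω'', hf ω]
      have e1 : (fun s => (ω'' s).1) = fun s => (ω s).1 := funext hx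
      have e2 : (fun s => (ω'' s).2.2) = fun s => (ω s).2.2 := funext hz
      have e3 : (fun (j : Fin K) (_ : j.val < k.val) => Jx j ω'')
          = fun (j : Fin K) (_ : j.val < k.val) => Jx j ω := by
        funext j hj
        exact IHx j (by omega)
      have e4 : (fun (j : Fin K) (_ : j.val < k.val) => Jy j ω'')
          = fun (j : Fin K) (_ : j.val < k.val) => Jy j ω := by
        funext j hj
        exact Hy j (by omega)
      rw [e1, e2, e3, e4]
  intro t
  refine ⟨?_, ?_, ?_, ?_⟩
  · -- chain (1)
    refine ml_swap p hp0 hsw _ _ _ (fun s : Fin n => s = t) ?_ ?_ ?_ ?_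
    · intro ω ω' hcc s hs
      subst hs
      exact Or.inl hcc
    · intro ω ω' hcc
      simp only [Prod.mk.injEq]
      refine ⟨?_, ?_, ?_⟩
      · exact (Jtr 0 ω (swapY (fun s : Fin n => s = t) ω ω') (swapY (fun s : Fin n => s = t) ω ω')
          (fun s => swapY_fst _ ω ω' s) (fun s => swapY_z _ ω ω' s) (fun s => rfl)
          (fun k hk => absurd hk (Nat.not_lt_zero _))
          (fun k hk => absurd hk (Nat.not_lt_zero _))).2 ⟨0, hK⟩ (Nat.le_refl 0)
      · exact below_congr fun s _ => swapY_z _ ω ω' s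
      · refine above_congr fun s hs => swapY_y_not _ ω ω' s ?_
        intro h
        rw [h] at hs
        exact lt_irrefl _ hs
    · intro ω ω' hcc
      exact swapY_y_mem _ ω ω' t rfl
    · intro ω ω' hcc
      exact swapY_z _ ω ω' t
  · -- chain (2)
    intro l
    refine ml_swap p hp0 hsw _ _ _ (fun s : Fin n => s.val ≤ t.val) ?_ ?_ ?_ ?_
    · intro ω ω' hcc s hs
      have h3 : below (t.val + 1) (fun s => (ω s).2.2)
          = below (t.val + 1) (fun s => (ω' s).2.2) := congrArg (fun q => q.2.2.1) hcc
      exact Or.inl (below_ext h3 s (by omega))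
    · intro ω ω' hcc
      have h1 : trunc l.val (fun k => Jx k ω) = trunc l.val (fun k => Jx k ω') :=
        congrArg (fun q => q.1) hcc
      have h2 : trunc l.val (fun k => Jy k ω) = trunc l.val (fun k => Jy k ω') :=
        congrArg (fun q => q.2.1) hcc
      have h4 : above t.val (fun s => (ω s).2.1) = above t.val (fun s => (ω' s).2.1) :=
        congrArg (fun q => q.2.2.2) hcc
      have hy_all : ∀ s, ((swapY (fun s : Fin n => s.val ≤ t.val) ω ω') s).2.1
          = (ω' s).2.1 := by
        intro s
        by_cases hs : s.val ≤ t.val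
        · exact swapY_y_mem _ ω ω' s hs
        · rw [swapY_y_not _ ω ω' s hs]
          exact above_ext h4 s (by omega)
      obtain ⟨HJy, HJx⟩ := Jtr l.val ω ω' (swapY (fun s : Fin n => s.val ≤ t.val) ω ω')
        (fun s => swapY_fst _ ω ω' s) (fun s => swapY_z _ ω ω' s) hy_all
        (trunc_ext h1) (trunc_ext h2)
      simp only [Prod.mk.injEq]
      exact ⟨HJx l (Nat.le_refl _), above_congr fun s _ => swapY_z _ ω ω' s⟩
    · intro ω ω' hcc
      exact swapY_y_mem _ ω ω' t (Nat.le_refl _)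
    · intro ω ω' hcc
      have h1 : trunc l.val (fun k => Jx k ω) = trunc l.val (fun k => Jx k ω') :=
        congrArg (fun q => q.1) hcc
      have h2 : trunc l.val (fun k => Jy k ω) = trunc l.val (fun k => Jy k ω') :=
        congrArg (fun q => q.2.1) hcc
      have h4 : above t.val (fun s => (ω s).2.1) = above t.val (fun s => (ω' s).2.1) :=
        congrArg (fun q => q.2.2.2) hcc
      have hy_all : ∀ s, ((swapY (fun s : Fin n => s.val ≤ t.val) ω ω') s).2.1
          = (ω' s).2.1 := by
        intro s
        by_cases hs : s.val ≤ t.val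
        · exact swapY_y_mem _ ω ω' s hs
        · rw [swapY_y_not _ ω ω' s hs]
          exact above_ext h4 s (by omega)
      obtain ⟨HJy, HJx⟩ := Jtr l.val ω ω' (swapY (fun s : Fin n => s.val ≤ t.val) ω ω')
        (fun s => swapY_fst _ ω ω' s) (fun s => swapY_z _ ω ω' s) hy_all
        (trunc_ext h1) (trunc_ext h2)
      simp only [Prod.mk.injEq]
      exact ⟨trunc_congr fun k hk => HJx k (Nat.le_of_lt hk),
        trunc_congr fun k hk => HJy k hk,
        below_congr fun s _ => swapY_z _ ω ω' s,
        above_congr fun s hs => swapY_y_not _ ω ω' s (by omega)⟩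
  · -- chain (3)
    intro l
    rw [cmi_comm]
    refine ml_swap p hp0 hsw _ _ _ (fun _ : Fin n => True) ?_ ?_ ?_ ?_
    · intro ω ω' hcc s _
      have h3 : below t.val (fun s => (ω s).2.2) = below t.val (fun s => (ω' s).2.2) :=
        congrArg (fun q => q.2.2.1) hcc
      have h4 : fromIdx t.val (fun s => (ω s).2.1) = fromIdx t.val (fun s => (ω' s).2.1) :=
        congrArg (fun q => q.2.2.2) hcc
      by_cases hs : s.val < t.val
      · exact Or.inl (below_ext h3 s hs)
      · exact Or.inr (fromIdx_ext h4 s (by omega))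
    · intro ω ω' hcc
      simp only [Prod.mk.injEq]
      exact ⟨swapY_fst _ ω ω' t, swapY_z _ ω ω' t⟩
    · intro ω ω' hcc
      have h1 : trunc (l.val + 1) (fun k => Jx k ω) = trunc (l.val + 1) (fun k => Jx k ω') :=
        congrArg (fun q => q.1) hcc
      have h2 : trunc l.val (fun k => Jy k ω) = trunc l.val (fun k => Jy k ω') :=
        congrArg (fun q => q.2.1) hcc
      have hy_all : ∀ s, ((swapY (fun _ : Fin n => True) ω ω') s).2.1 = (ω' s).2.1 :=
        fun s => swapY_y_mem _ ω ω' s trivial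
      obtain ⟨HJy, HJx⟩ := Jtr l.val ω ω' (swapY (fun _ : Fin n => True) ω ω')
        (fun s => swapY_fst _ ω ω' s) (fun s => swapY_z _ ω ω' s) hy_all
        (fun k hk => trunc_ext h1 k (by omega)) (trunc_ext h2)
      simp only [Prod.mk.injEq]
      constructor
      · obtain ⟨f, hf⟩ := hJy l
        rw [hf (swapY (fun _ : Fin n => True) ω ω'), hf ω']
        have e1 : (fun s => ((swapY (fun _ : Fin n => True) ω ω') s).2.1)
            = fun s => (ω' s).2.1 := funext hy_all
        have e2 : (fun (j : Fin K) (_ : j.val ≤ l.val) =>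
              Jx j (swapY (fun _ : Fin n => True) ω ω'))
            = fun (j : Fin K) (_ : j.val ≤ l.val) => Jx j ω' := by
          funext j hj
          rw [HJx j hj, trunc_ext h1 j (by omega)]
        have e3 : (fun (j : Fin K) (_ : j.val < l.val) =>
              Jy j (swapY (fun _ : Fin n => True) ω ω'))
            = fun (j : Fin K) (_ : j.val < l.val) => Jy j ω' := by
          funext j hj
          rw [HJy j hj, trunc_ext h2 j hj]
        rw [e1, e2, e3]
      · exact below_congr fun s _ => hy_all s
    · intro ω ω' hcc
      have h1 : trunc (l.val + 1) (fun k => Jx k ω) = trunc (l.val + 1) (fun k => Jx k ω') :=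
        congrArg (fun q => q.1) hcc
      have h2 : trunc l.val (fun k => Jy k ω) = trunc l.val (fun k => Jy k ω') :=
        congrArg (fun q => q.2.1) hcc
      have h4 : fromIdx t.val (fun s => (ω s).2.1) = fromIdx t.val (fun s => (ω' s).2.1) :=
        congrArg (fun q => q.2.2.2) hcc
      have hy_all : ∀ s, ((swapY (fun _ : Fin n => True) ω ω') s).2.1 = (ω' s).2.1 :=
        fun s => swapY_y_mem _ ω ω' s trivial
      obtain ⟨HJy, HJx⟩ := Jtr l.val ω ω' (swapY (fun _ : Fin n => True) ω ω')
        (fun s => swapY_fst _ ω ω' s) (fun s => swapY_z _ ω ω' s) hy_all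
        (fun k hk => trunc_ext h1 k (by omega)) (trunc_ext h2)
      simp only [Prod.mk.injEq]
      exact ⟨trunc_congr fun k hk => HJx k (by omega),
        trunc_congr fun k hk => HJy k hk,
        below_congr fun s _ => swapY_z _ ω ω' s,
        fromIdx_congr fun s hs => (hy_all s).trans (fromIdx_ext h4 s hs).symm⟩
  · -- chain (4)
    refine ml_swap p hp0 hsw _ _ _ (fun s : Fin n => s.val ≤ t.val) ?_ ?_ ?_ ?_
    · intro ω ω' hcc s hs
      have h3 : below (t.val + 1) (fun s => (ω s).2.2)
          = below (t.val + 1) (fun s => (ω' s).2.2) := congrArg (fun q => q.2.2.1) hcc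
      exact Or.inl (below_ext h3 s (by omega))
    · intro ω ω' hcc
      simp only [Prod.mk.injEq]
      exact ⟨above_congr fun s _ => swapY_z _ ω ω' s, funext fun s => swapY_fst _ ω ω' s⟩
    · intro ω ω' hcc
      have h4 : above t.val (fun s => (ω s).2.1) = above t.val (fun s => (ω' s).2.1) :=
        congrArg (fun q => q.2.2.2) hcc
      refine below_congr fun s hs => ?_
      by_cases hs' : s.val ≤ t.val
      · exact swapY_y_mem _ ω ω' s hs'
      · rw [swapY_y_not _ ω ω' s hs']
        exact above_ext h4 s (by omega)
    · intro ω ω' hcc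
      have h1 : (fun k => Jx k ω) = fun k => Jx k ω' := congrArg (fun q => q.1) hcc
      have h2 : (fun k => Jy k ω) = fun k => Jy k ω' := congrArg (fun q => q.2.1) hcc
      have h4 : above t.val (fun s => (ω s).2.1) = above t.val (fun s => (ω' s).2.1) :=
        congrArg (fun q => q.2.2.2) hcc
      have hy_all : ∀ s, ((swapY (fun s : Fin n => s.val ≤ t.val) ω ω') s).2.1
          = (ω' s).2.1 := by
        intro s
        by_cases hs : s.val ≤ t.val
        · exact swapY_y_mem _ ω ω' s hs
        · rw [swapY_y_not _ ω ω' s hs]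
          exact above_ext h4 s (by omega)
      obtain ⟨HJy, HJx⟩ := Jtr K ω ω' (swapY (fun s : Fin n => s.val ≤ t.val) ω ω')
        (fun s => swapY_fst _ ω ω' s) (fun s => swapY_z _ ω ω' s) hy_all
        (fun k _ => congrFun h1 k) (fun k _ => congrFun h2 k)
      simp only [Prod.mk.injEq]
      exact ⟨funext fun k => HJx k (Nat.le_of_lt k.isLt),
        funext fun k => HJy k k.isLt,
        below_congr fun s _ => swapY_z _ ω ω' s,
        above_congr fun s hs => swapY_y_not _ ω ω' s (by omega)⟩
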